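/- arXiv:0902.0557 — 2 statements merged into one kernel-verified Lean document; each statement's English description precedes it below -/
import Mathlib

section
/- Let C ≥ 1, let t > d be an integer, let s > d + t be real, and let f_k : ℝ^d → ℂ be measurable functions with |f_k(x)| ≤ C(1+|x-k|)^{-s} for all x ∈ ℝ^d and k ∈ ℤ^d. If a sequence (c_k) of complex numbers satisfies |c_k| ≤ α(1+|k-j|)^{-t} for some α > 0 and a fixed j ∈ ℤ^d, then the series f(x) = ∑_k c_k f_k(x) converges absolutely pointwise and |f(x)| ≤ c^t · α C (1+|x-j|)^{-t} for all x ∈ ℝ^d, where c > 0 depends only on d. -/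
open scoped BigOperators

lemma intSum {p : ℝ} (hp : 1 < p) : Summable (fun n : ℤ => (1 + |(n : ℝ)|) ^ (-p)) := by
  have hnat : Summable (fun n : ℕ => (1 + (n : ℝ)) ^ (-p)) := by
    have h0 : Summable (fun n : ℕ => (n : ℝ) ^ (-p)) :=
      Real.summable_nat_rpow.mpr (by linarith)
    have := (summable_nat_add_iff 1).mpr h0
    refine this.congr fun n => ?_
    push_cast
    ring_nf
  apply Summable.of_nat_of_neg <;> · refine hnat.congr fun n => ?_ ; push_cast ; simp [abs_of_nonneg]

lemma piProdSummable {g : ℤ → ℝ} (hg : Summable g) (hg0 : ∀ n, 0 ≤ g n) :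
    ∀ n : ℕ, Summable (fun k : Fin n → ℤ => ∏ i, g (k i)) := by
  intro n
  induction n with
  | zero => exact .of_finite
  | succ n ih =>
      have hg0' : 0 ≤ g := hg0
      have hp0 : 0 ≤ fun k : Fin n → ℤ => ∏ i, g (k i) :=
        fun v => Finset.prod_nonneg fun i _ => hg0 _
      have h2 : Summable (fun p : ℤ × (Fin n → ℤ) => g p.1 * ∏ i, g (p.2 i)) :=
        Summable.mul_of_nonneg (f := g) (g := fun k : Fin n → ℤ => ∏ i, g (k i)) hg ih hg0' hp0
      rw [← (Fin.consEquiv (fun _ : Fin (n+1) => ℤ)).summable_iff]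
      refine h2.congr fun p => ?_
      show g p.1 * ∏ i, g (p.2 i) = ∏ i, (g ∘ Fin.cons p.1 p.2) i
      rw [Fin.comp_cons, Fin.prod_cons]
      rfl

lemma normCastPi {d : ℕ} (k : Fin d → ℤ) : ‖(fun i => (k i : ℝ))‖ = ‖k‖ := by
  apply le_antisymm
  · refine (pi_norm_le_iff_of_nonneg (norm_nonneg k)).2 fun i => ?_
    rw [Int.norm_cast_real]
    exact norm_le_pi_norm k i
  · refine (pi_norm_le_iff_of_nonneg (norm_nonneg _)).2 fun i => ?_
    rw [← Int.norm_cast_real]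
    exact norm_le_pi_norm (fun i => (k i : ℝ)) i

lemma normCastSub {d : ℕ} (k j : Fin d → ℤ) :
    ‖(fun i => (k i : ℝ)) - (fun i => (j i : ℝ))‖ = ‖k - j‖ := by
  rw [← normCastPi (k - j)]
  congr 1
  funext i
  simp

lemma latticeSummable {d : ℕ} (hd : 1 ≤ d) :
    Summable (fun k : Fin d → ℤ => (1 + ‖k‖) ^ (-((d : ℝ) + 1))) := by
  have hd0 : (0:ℝ) < d := by exact_mod_cast hd
  set p : ℝ := ((d:ℝ)+1)/(d:ℝ) with hpdef
  have hp : 1 < p := by rw [hpdef, lt_div_iff₀ hd0]; linarith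
  have hg : Summable (fun n : ℤ => (1+|(n:ℝ)|)^(-p)) := intSum hp
  have hprod := piProdSummable hg (fun n => by positivity) d
  refine hprod.of_nonneg_of_le (fun k => by positivity) fun k => ?_
  have hN : (1:ℝ) ≤ 1 + ‖k‖ := by have := norm_nonneg k; linarith
  have h1 : (0:ℝ) < ∏ i, (1+|((k i):ℝ)|) := Finset.prod_pos fun i _ => by positivity
  have hprodle : ∏ i, (1+|((k i):ℝ)|) ≤ (1+‖k‖)^(d:ℕ) := by
    calc ∏ i, (1+|((k i):ℝ)|) ≤ ∏ _i : Fin d, (1+‖k‖) := by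
          refine Finset.prod_le_prod (fun i _ => by positivity) (fun i _ => ?_)
          have h2 : |((k i):ℝ)| ≤ ‖k‖ := by
            rw [← Real.norm_eq_abs, Int.norm_cast_real]; exact norm_le_pi_norm k i
          linarith
      _ = (1+‖k‖)^(d:ℕ) := by simp [Finset.prod_const]
  calc (1+‖k‖) ^ (-((d:ℝ)+1)) = ((1+‖k‖)^(d:ℕ))^(-p) := by
        rw [← Real.rpow_natCast (1+‖k‖) d, ← Real.rpow_mul (by linarith)]
        congr 1
        rw [hpdef]
        field_simp
    _ ≤ (∏ i, (1+|((k i):ℝ)|))^(-p) :=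
        Real.rpow_le_rpow_of_nonpos h1 hprodle (by simp only [neg_nonpos]; positivity)
    _ = ∏ i, (1+|((k i):ℝ)|)^(-p) :=
        (Real.finset_prod_rpow _ _ (fun i _ => by positivity) _).symm

lemma halfpow {D t' : ℝ} (hD : 0 < D) : (D/2)^(-t') = 2^t' * D^(-t') := by
  have h : (2:ℝ)⁻¹ ^ (-t') = 2 ^ t' := by
    rw [← Real.rpow_neg_one (2:ℝ), ← Real.rpow_mul (by norm_num : (0:ℝ) ≤ 2)]
    norm_num
  rw [div_eq_mul_inv, Real.mul_rpow hD.le (by norm_num), h]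
  ring

lemma core {t' s e D A B : ℝ} (he : 0 < e) (hte : e ≤ t') (hts : t' ≤ s) (hes : e ≤ s)
    (hA : 1 ≤ A) (hB : 1 ≤ B) (hD : 1 ≤ D) (hDAB : D ≤ A + B) :
    B^(-t') * A^(-s) ≤ 2^t' * D^(-t') * (B^(-e) + A^(-e)) := by
  have h2 : ∀ X : ℝ, 1 ≤ X → D/2 ≤ X → X^(-t') ≤ 2^t' * D^(-t') := by
    intro X hX hDX
    calc X^(-t') ≤ (D/2)^(-t') :=
          Real.rpow_le_rpow_of_nonpos (by linarith) hDX (by linarith)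
      _ = 2^t' * D^(-t') := halfpow (by linarith)
  rcases le_or_gt (D/2) A with h | h
  · have k1 : B^(-t') ≤ B^(-e) := Real.rpow_le_rpow_of_exponent_le hB (by linarith)
    have k2 : A^(-s) ≤ 2^t' * D^(-t') :=
      (Real.rpow_le_rpow_of_exponent_le hA (by linarith)).trans (h2 A hA h)
    have pos : (0:ℝ) ≤ 2^t' * D^(-t') * A^(-e) := by positivity
    calc B^(-t')*A^(-s) ≤ B^(-e) * (2^t'*D^(-t')) :=
          mul_le_mul k1 k2 (by positivity) (by positivity)
      _ ≤ 2^t'*D^(-t')*(B^(-e)+A^(-e)) := by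
          have hE : 2^t'*D^(-t')*(B^(-e)+A^(-e))
              = B^(-e)*(2^t'*D^(-t')) + 2^t'*D^(-t')*A^(-e) := by ring
          rw [hE]; linarith
  · have k1 : B^(-t') ≤ 2^t' * D^(-t') := h2 B hB (by linarith)
    have k2 : A^(-s) ≤ A^(-e) := Real.rpow_le_rpow_of_exponent_le hA (by linarith)
    have pos : (0:ℝ) ≤ 2^t' * D^(-t') * B^(-e) := by positivity
    calc B^(-t')*A^(-s) ≤ (2^t'*D^(-t')) * A^(-e) :=
          mul_le_mul k1 k2 (by positivity) (by positivity)
      _ ≤ 2^t'*D^(-t')*(B^(-e)+A^(-e)) := by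
          have hE : 2^t'*D^(-t')*(B^(-e)+A^(-e))
              = 2^t'*D^(-t')*B^(-e) + (2^t'*D^(-t'))*A^(-e) := by ring
          rw [hE]; linarith

/-- If `|f_k(x)| ≤ C(1+|x-k|)^{-s}` and `|c_k| ≤ α(1+|k-j|)^{-t}`, then
`∑_k c_k f_k(x)` converges absolutely pointwise and is bounded by
`c^t · αC (1+|x-j|)^{-t}` with `c` depending only on `d`. -/
theorem stmt6 (d : ℕ) (hd : 1 ≤ d) :
    ∃ c : ℝ, 0 < c ∧
      ∀ (C : ℝ) (t : ℤ) (s : ℝ) (f : (Fin d → ℤ) → (Fin d → ℝ) → ℂ),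
        1 ≤ C → (d : ℤ) < t → (d : ℝ) + (t : ℝ) < s →
        (∀ k, Measurable (f k)) →
        (∀ k x, ‖f k x‖ ≤ C * (1 + ‖x - fun i => (k i : ℝ)‖) ^ (-s)) →
        ∀ (cs : (Fin d → ℤ) → ℂ) (α : ℝ) (j : Fin d → ℤ), 0 < α →
          (∀ k, ‖cs k‖ ≤ α * (1 + ‖k - j‖) ^ (-(t : ℝ))) →
          ∀ x : Fin d → ℝ,
            Summable (fun k : Fin d → ℤ => ‖cs k * f k x‖) ∧
            ‖∑' k : Fin d → ℤ, cs k * f k x‖ ≤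
              c ^ (t : ℝ) * (α * C) * (1 + ‖x - fun i => (j i : ℝ)‖) ^ (-(t : ℝ)) := by
  set e : ℝ := (d : ℝ) + 1 with hedef
  have he : 0 < e := by positivity
  have hSb : Summable (fun k : Fin d → ℤ => (1 + ‖k‖) ^ (-e)) := latticeSummable hd
  set S : ℝ := ∑' k : Fin d → ℤ, (1 + ‖k‖) ^ (-e) with hSdef
  have hS0 : 0 ≤ S := tsum_nonneg fun k => by positivity
  refine ⟨2 * (1 + (1 + 2 ^ e) * S), by positivity, ?_⟩
  intro C t s f hC ht hs _hmeas hf cs α j hα hcs x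
  have hd1 : (1:ℝ) ≤ (d:ℝ) := by exact_mod_cast hd
  have hte : e ≤ (t:ℝ) := by
    have : (d:ℤ) + 1 ≤ t := ht
    have : ((d:ℝ)) + 1 ≤ (t:ℝ) := by exact_mod_cast this
    simpa [hedef] using this
  have ht1 : (1:ℝ) ≤ (t:ℝ) := by linarith
  have hts : (t:ℝ) ≤ s := by linarith
  have hes : e ≤ s := by linarith
  set j' : Fin d → ℝ := fun i => (j i : ℝ) with hj'def
  set D : ℝ := 1 + ‖x - j'‖ with hDdef
  have hD : 1 ≤ D := by have := norm_nonneg (x - j'); simp only [hDdef]; linarith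
  -- summability of the two comparison families
  have hSB : Summable (fun k : Fin d → ℤ => (1 + ‖k - j‖) ^ (-e)) := by
    have := (Equiv.subRight j).summable_iff
      (f := fun k : Fin d → ℤ => (1 + ‖k‖) ^ (-e)) |>.mpr hSb
    exact this.congr fun k => rfl
  have hSBsum : ∑' k : Fin d → ℤ, (1 + ‖k - j‖) ^ (-e) = S := by
    exact (Equiv.subRight j).tsum_eq (fun k : Fin d → ℤ => (1 + ‖k‖) ^ (-e))
  set r : Fin d → ℤ := fun i => round (x i) with hrdef
  have hSr : Summable (fun k : Fin d → ℤ => (1 + ‖k - r‖) ^ (-e)) := by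
    have := (Equiv.subRight r).summable_iff
      (f := fun k : Fin d → ℤ => (1 + ‖k‖) ^ (-e)) |>.mpr hSb
    exact this.congr fun k => rfl
  have hSrsum : ∑' k : Fin d → ℤ, (1 + ‖k - r‖) ^ (-e) = S := by
    exact (Equiv.subRight r).tsum_eq (fun k : Fin d → ℤ => (1 + ‖k‖) ^ (-e))
  have hxr : ‖x - fun i => (r i : ℝ)‖ ≤ 1/2 := by
    refine (pi_norm_le_iff_of_nonneg (by norm_num)).2 fun i => ?_
    simp only [Pi.sub_apply, Real.norm_eq_abs, hrdef]
    exact abs_sub_round (x i)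
  have hAbound : ∀ k : Fin d → ℤ,
      (1 + ‖x - fun i => (k i : ℝ)‖) ^ (-e) ≤ 2 ^ e * (1 + ‖k - r‖) ^ (-e) := by
    intro k
    have hm0 : (0:ℝ) ≤ ‖k - r‖ := norm_nonneg _
    have htri : ‖k - r‖ ≤ ‖x - fun i => (k i : ℝ)‖ + 1/2 := by
      have h1 : ‖(fun i => (k i:ℝ)) - (fun i => (r i:ℝ))‖ = ‖k - r‖ := normCastSub k r
      calc ‖k - r‖ = ‖(fun i => (k i:ℝ)) - (fun i => (r i:ℝ))‖ := h1.symm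
        _ ≤ ‖(fun i => (k i:ℝ)) - x‖ + ‖x - (fun i => (r i:ℝ))‖ := by
            have := norm_add_le ((fun i => (k i:ℝ)) - x) (x - (fun i => (r i:ℝ)))
            simpa [sub_add_sub_cancel] using this
        _ = ‖x - (fun i => (k i:ℝ))‖ + ‖x - (fun i => (r i:ℝ))‖ := by
            rw [norm_sub_rev ((fun i => (k i:ℝ))) x]
        _ ≤ ‖x - fun i => (k i : ℝ)‖ + 1/2 := by linarith [hxr]
    have h3 : (1 + ‖k - r‖)/2 ≤ 1 + ‖x - fun i => (k i : ℝ)‖ := by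
      have := norm_nonneg (x - fun i => (k i : ℝ))
      linarith
    calc (1 + ‖x - fun i => (k i : ℝ)‖) ^ (-e)
        ≤ ((1 + ‖k - r‖)/2) ^ (-e) :=
          Real.rpow_le_rpow_of_nonpos (by linarith) h3 (by linarith)
      _ = 2 ^ e * (1 + ‖k - r‖) ^ (-e) := halfpow (by linarith)
  have hSA : Summable (fun k : Fin d → ℤ => (1 + ‖x - fun i => (k i : ℝ)‖) ^ (-e)) :=
    Summable.of_nonneg_of_le (fun k => by positivity) hAbound (hSr.mul_left _)
  have hSAsum : ∑' k : Fin d → ℤ, (1 + ‖x - fun i => (k i : ℝ)‖) ^ (-e) ≤ 2 ^ e * S := by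
    calc ∑' k : Fin d → ℤ, (1 + ‖x - fun i => (k i : ℝ)‖) ^ (-e)
        ≤ ∑' k : Fin d → ℤ, 2 ^ e * (1 + ‖k - r‖) ^ (-e) :=
          Summable.tsum_le_tsum hAbound hSA (hSr.mul_left _)
      _ = 2 ^ e * S := by rw [tsum_mul_left, hSrsum]
  -- the dominating family
  set h : (Fin d → ℤ) → ℝ := fun k =>
    α * C * (2 ^ (t:ℝ) * D ^ (-(t:ℝ)) *
      ((1 + ‖k - j‖) ^ (-e) + (1 + ‖x - fun i => (k i : ℝ)‖) ^ (-e))) with hhdef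
  have key1 : ∀ k, ‖cs k * f k x‖ ≤ h k := by
    intro k
    set A : ℝ := 1 + ‖x - fun i => (k i : ℝ)‖ with hAdef
    set B : ℝ := 1 + ‖k - j‖ with hBdef
    have hA : 1 ≤ A := by have := norm_nonneg (x - fun i => (k i : ℝ)); simp only [hAdef]; linarith
    have hB : 1 ≤ B := by have := norm_nonneg (k - j); simp only [hBdef]; linarith
    have hDAB : D ≤ A + B := by
      have h1 : ‖x - j'‖ ≤ ‖x - (fun i => (k i:ℝ))‖ + ‖(fun i => (k i:ℝ)) - j'‖ := by
        have := norm_add_le (x - (fun i => (k i:ℝ))) ((fun i => (k i:ℝ)) - j')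
        simpa [sub_add_sub_cancel] using this
      have h2 : ‖(fun i => (k i:ℝ)) - j'‖ = ‖k - j‖ := normCastSub k j
      rw [h2] at h1
      simp only [hDdef, hAdef, hBdef]
      linarith
    have hcore := core he hte hts hes hA hB hD hDAB
    rw [norm_mul]
    calc ‖cs k‖ * ‖f k x‖
        ≤ (α * B ^ (-(t:ℝ))) * (C * A ^ (-s)) := by
          refine mul_le_mul (hcs k) (hf k x) (norm_nonneg _) (by positivity)
      _ = α * C * (B ^ (-(t:ℝ)) * A ^ (-s)) := by ring
      _ ≤ α * C * (2 ^ (t:ℝ) * D ^ (-(t:ℝ)) * (B ^ (-e) + A ^ (-e))) := by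
          refine mul_le_mul_of_nonneg_left hcore (by positivity)
      _ = h k := by rw [hhdef]
  have key2 : Summable h := by
    refine ((hSB.add hSA).mul_left (α * C * (2 ^ (t:ℝ) * D ^ (-(t:ℝ))))).congr fun k => ?_
    simp only [hhdef]
    ring
  have habs : Summable (fun k : Fin d → ℤ => ‖cs k * f k x‖) :=
    Summable.of_nonneg_of_le (fun k => norm_nonneg _) key1 key2
  refine ⟨habs, ?_⟩
  have hnorm : Summable (fun k : Fin d → ℤ => ‖cs k * f k x‖) :=
    habs.congr fun k => rfl
  calc ‖∑' k : Fin d → ℤ, cs k * f k x‖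
      = ‖∑' k : Fin d → ℤ, cs k * f k x‖ := rfl
    _ ≤ ∑' k : Fin d → ℤ, ‖cs k * f k x‖ := norm_tsum_le_tsum_norm hnorm
    _ ≤ ∑' k : Fin d → ℤ, h k := by
        refine Summable.tsum_le_tsum (fun k => ?_) hnorm key2
        exact key1 k
    _ = α * C * (2 ^ (t:ℝ) * D ^ (-(t:ℝ))) *
        (S + ∑' k : Fin d → ℤ, (1 + ‖x - fun i => (k i : ℝ)‖) ^ (-e)) := by
        have h1 : ∀ k : Fin d → ℤ, h k = α * C * (2 ^ (t:ℝ) * D ^ (-(t:ℝ))) *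
            ((1 + ‖k - j‖) ^ (-e) + (1 + ‖x - fun i => (k i : ℝ)‖) ^ (-e)) := by
          intro k; simp only [hhdef]; ring
        simp_rw [h1]
        rw [tsum_mul_left, Summable.tsum_add hSB hSA, hSBsum]
    _ ≤ (2 * (1 + (1 + 2 ^ e) * S)) ^ (t:ℝ) * (α * C) * D ^ (-(t:ℝ)) := by
        set K : ℝ := (1 + 2 ^ e) * S with hKdef
        have hK0 : 0 ≤ K := by positivity
        have step1 : S + ∑' k : Fin d → ℤ, (1 + ‖x - fun i => (k i : ℝ)‖) ^ (-e) ≤ K := by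
          simp only [hKdef]
          have : S + 2 ^ e * S = (1 + 2 ^ e) * S := by ring
          linarith [hSAsum]
        have step2 : (2:ℝ) ^ (t:ℝ) * K ≤ (2 * (1 + K)) ^ (t:ℝ) := by
          rw [Real.mul_rpow (by norm_num) (by positivity)]
          refine mul_le_mul_of_nonneg_left ?_ (by positivity)
          calc K ≤ 1 + K := by linarith
            _ = (1 + K) ^ (1:ℝ) := (Real.rpow_one _).symm
            _ ≤ (1 + K) ^ (t:ℝ) :=
              Real.rpow_le_rpow_of_exponent_le (by linarith) ht1
        have hsumnonneg : 0 ≤ S + ∑' k : Fin d → ℤ,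
            (1 + ‖x - fun i => (k i : ℝ)‖) ^ (-e) := by
          have : 0 ≤ ∑' k : Fin d → ℤ, (1 + ‖x - fun i => (k i : ℝ)‖) ^ (-e) :=
            tsum_nonneg fun k => by positivity
          linarith
        have hmain : 2 ^ (t:ℝ) *
            (S + ∑' k : Fin d → ℤ, (1 + ‖x - fun i => (k i : ℝ)‖) ^ (-e)) ≤
            (2 * (1 + K)) ^ (t:ℝ) := by
          calc 2 ^ (t:ℝ) * (S + ∑' k : Fin d → ℤ,
                (1 + ‖x - fun i => (k i : ℝ)‖) ^ (-e)) ≤ 2 ^ (t:ℝ) * K :=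
                mul_le_mul_of_nonneg_left step1 (by positivity)
            _ ≤ (2 * (1 + K)) ^ (t:ℝ) := step2
        have hfin : α * C * (2 ^ (t:ℝ) * D ^ (-(t:ℝ))) *
            (S + ∑' k : Fin d → ℤ, (1 + ‖x - fun i => (k i : ℝ)‖) ^ (-e))
            = (2 ^ (t:ℝ) * (S + ∑' k : Fin d → ℤ,
                (1 + ‖x - fun i => (k i : ℝ)‖) ^ (-e))) * (α * C * D ^ (-(t:ℝ))) := by
          ring
        rw [hfin]
        have := mul_le_mul_of_nonneg_right hmain
          (show 0 ≤ α * C * D ^ (-(t:ℝ)) by positivity)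
        calc (2 ^ (t:ℝ) * (S + ∑' k : Fin d → ℤ,
              (1 + ‖x - fun i => (k i : ℝ)‖) ^ (-e))) * (α * C * D ^ (-(t:ℝ)))
            ≤ (2 * (1 + K)) ^ (t:ℝ) * (α * C * D ^ (-(t:ℝ))) := this
          _ = (2 * (1 + (1 + 2 ^ e) * S)) ^ (t:ℝ) * (α * C) * D ^ (-(t:ℝ)) := by
              rw [hKdef]; ring
end

section
/- Let A, B be bounded operators on ℓ^2(ℤ^d) given by matrices (a_{k,j}) and (b_{k,j}), and suppose D_h(A) and D_h(B), defined by D_h(L)_{k,j} = (k_h - j_h) l_{k,j}, are also bounded operators. Then D_h(AB) is bounded and D_h(AB) = D_h(A)B + A·D_h(B), i.e., D_h is a derivation on its domain. -/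
noncomputable section

/-- Evaluation at a point as a continuous linear map on `ℓ²`. -/
def evCLM (d : ℕ) (k : Fin d → ℤ) : lp (fun _ : Fin d → ℤ => ℂ) 2 →L[ℂ] ℂ :=
  LinearMap.mkContinuous
    { toFun := fun f => f k
      map_add' := fun f g => rfl
      map_smul' := fun c f => rfl } 1
    (fun f => (by simpa using lp.norm_apply_le_norm (by norm_num : (2 : ENNReal) ≠ 0) f k : ‖(f : ∀ _ : Fin d → ℤ, ℂ) k‖ ≤ 1 * ‖f‖))

lemma hasSum_entry (d : ℕ) (k : Fin d → ℤ)
    (T : lp (fun _ : Fin d → ℤ => ℂ) 2 →L[ℂ] lp (fun _ : Fin d → ℤ => ℂ) 2)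
    (x : lp (fun _ : Fin d → ℤ => ℂ) 2) :
    HasSum (fun l : Fin d → ℤ => x l * (T (lp.single 2 l (1 : ℂ)) : ∀ _ : Fin d → ℤ, ℂ) k)
      ((T x : ∀ _ : Fin d → ℤ, ℂ) k) := by
  have h1 : HasSum (fun l : Fin d → ℤ => lp.single 2 l (x l)) x :=
    lp.hasSum_single (by norm_num) x
  have h2 := h1.mapL ((evCLM d k).comp T)
  refine h2.congr_fun fun l => ?_
  have : (lp.single 2 l (x l) : lp (fun _ : Fin d → ℤ => ℂ) 2) = x l • lp.single 2 l (1 : ℂ) := by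
    rw [← lp.single_smul]; simp
  simp only [ContinuousLinearMap.coe_comp', Function.comp_apply, this, map_smul]
  simp [evCLM, smul_eq_mul]
  left; rfl

/-- `D_h` is a derivation: if `A`, `B`, `D_h(A)`, `D_h(B)` are bounded operators on
`ℓ²(ℤ^d)` (where `D_h(L)_{k,j} = (k_h-j_h) l_{k,j}` on matrix entries), then `D_h(AB)` is
bounded and `D_h(AB) = D_h(A)B + A·D_h(B)`; concretely the bounded operator
`D_h(A)∘B + A∘D_h(B)` has matrix entries `(k_h-j_h)·(AB)_{k,j}`. -/
theorem stmt10 (d : ℕ) (hd : 1 ≤ d) (h : Fin d)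
    (A B DA DB : lp (fun _ : Fin d → ℤ => ℂ) 2 →L[ℂ] lp (fun _ : Fin d → ℤ => ℂ) 2)
    (hDA : ∀ j k : Fin d → ℤ,
      (DA (lp.single 2 j (1 : ℂ)) : ∀ _ : Fin d → ℤ, ℂ) k
        = ((k h : ℂ) - (j h : ℂ)) * (A (lp.single 2 j (1 : ℂ)) : ∀ _ : Fin d → ℤ, ℂ) k)
    (hDB : ∀ j k : Fin d → ℤ,
      (DB (lp.single 2 j (1 : ℂ)) : ∀ _ : Fin d → ℤ, ℂ) k
        = ((k h : ℂ) - (j h : ℂ)) * (B (lp.single 2 j (1 : ℂ)) : ∀ _ : Fin d → ℤ, ℂ) k) :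
    ∀ j k : Fin d → ℤ,
      ((DA.comp B + A.comp DB) (lp.single 2 j (1 : ℂ)) : ∀ _ : Fin d → ℤ, ℂ) k
        = ((k h : ℂ) - (j h : ℂ)) *
            ((A.comp B) (lp.single 2 j (1 : ℂ)) : ∀ _ : Fin d → ℤ, ℂ) k := by
  intro j k
  set ej : lp (fun _ : Fin d → ℤ => ℂ) 2 := lp.single 2 j (1 : ℂ) with hej
  -- first term: (DA (B e_j))_k
  have h1 : HasSum
      (fun l : Fin d → ℤ => (B ej : ∀ _ : Fin d → ℤ, ℂ) l *
        (((k h : ℂ) - (l h : ℂ)) * (A (lp.single 2 l (1 : ℂ)) : ∀ _ : Fin d → ℤ, ℂ) k))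
      ((DA (B ej) : ∀ _ : Fin d → ℤ, ℂ) k) := by
    refine (hasSum_entry d k DA (B ej)).congr_fun fun l => ?_
    rw [hDA]
  -- second term: (A (DB e_j))_k
  have h2 : HasSum
      (fun l : Fin d → ℤ => (((l h : ℂ) - (j h : ℂ)) * (B ej : ∀ _ : Fin d → ℤ, ℂ) l) *
        (A (lp.single 2 l (1 : ℂ)) : ∀ _ : Fin d → ℤ, ℂ) k)
      ((A (DB ej) : ∀ _ : Fin d → ℤ, ℂ) k) := by
    refine (hasSum_entry d k A (DB ej)).congr_fun fun l => ?_
    rw [hDB]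
  -- RHS term
  have h3 : HasSum
      (fun l : Fin d → ℤ => ((k h : ℂ) - (j h : ℂ)) *
        ((B ej : ∀ _ : Fin d → ℤ, ℂ) l * (A (lp.single 2 l (1 : ℂ)) : ∀ _ : Fin d → ℤ, ℂ) k))
      (((k h : ℂ) - (j h : ℂ)) * (A (B ej) : ∀ _ : Fin d → ℤ, ℂ) k) :=
    (hasSum_entry d k A (B ej)).mul_left _
  have h12 := h1.add h2
  have key : (fun l : Fin d → ℤ =>
      (B ej : ∀ _ : Fin d → ℤ, ℂ) l *
        (((k h : ℂ) - (l h : ℂ)) * (A (lp.single 2 l (1 : ℂ)) : ∀ _ : Fin d → ℤ, ℂ) k)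
      + (((l h : ℂ) - (j h : ℂ)) * (B ej : ∀ _ : Fin d → ℤ, ℂ) l) *
        (A (lp.single 2 l (1 : ℂ)) : ∀ _ : Fin d → ℤ, ℂ) k)
      = fun l : Fin d → ℤ => ((k h : ℂ) - (j h : ℂ)) *
        ((B ej : ∀ _ : Fin d → ℤ, ℂ) l * (A (lp.single 2 l (1 : ℂ)) : ∀ _ : Fin d → ℤ, ℂ) k) := by
    funext l; ring
  rw [key] at h12
  have := h12.unique h3
  simpa using this

end
end
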